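/- Let C be a cycle of π and let t be the largest integer r with |E_r ∩ C| > b (with t = 0 if |C| ≤ b). Then E_{t+2} ∩ C = ∅. Moreover, if P is a path obtained from a cycle of π by one cut and t′ is the largest integer r with |E_r ∩ P| > b (with t′ = 0 if |P| ≤ b, levels computed on the path), then |E_{t′+2} ∩ P| = 1. -/

import Mathlib

attribute [local instance] Classical.propDecidable

variable {n : ℕ}

/-- The first element of `E` encountered strictly after `x` when following `π` along its cycle
(`x` itself if no element of `E` is reachable).  For `E = E_r` this is the map `π_r`. -/
noncomputable def nextIn (π : Equiv.Perm (Fin n)) (E : Finset (Fin n)) (x : Fin n) : Fin n :=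
  if h : ∃ k, 0 < k ∧ (⇑π)^[k] x ∈ E then (⇑π)^[Nat.find h] x else x

/-- `b`-fold iteration of `nextIn`; for `E = E_r` this is `π_r^b`. -/
noncomputable def stepB (π : Equiv.Perm (Fin n)) (b : ℕ) (E : Finset (Fin n)) (x : Fin n) :
    Fin n :=
  (nextIn π E)^[b] x

/-- `level π b r` is the set `E_{r+1}` (0-indexed): `level π b 0 = E_1 = [n]`, and `E_{r+1}`
consists of the elements `i` of `E_r` with `i < π_r^k(i)` for all `k ∈ {−b,…,b} \ {0}`. -/
noncomputable def level (π : Equiv.Perm (Fin n)) (b : ℕ) : ℕ → Finset (Fin n)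
  | 0 => Finset.univ
  | r + 1 =>
    (level π b r).filter fun i =>
      (∀ k ∈ Finset.Icc 1 b, i < (nextIn π (level π b r))^[k] i) ∧
      (∀ k ∈ Finset.Icc 1 b, i < (nextIn π⁻¹ (level π b r))^[k] i)

/-- The cycle of `π` containing `x`, as a finset. -/
def cycleOfF (π : Equiv.Perm (Fin n)) (x : Fin n) : Finset (Fin n) :=
  (Finset.range n).image fun k => (⇑π)^[k] x

/-- The `b`-local minima of a path, represented as the list of values (in path order):
a position is kept iff its value is smaller than all values at distance at most `b` in the
list, comparisons with out-of-range (undefined) positions being disregarded. -/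
def pmins (b : ℕ) (l : List ℕ) : List ℕ :=
  (List.range l.length).filterMap fun p =>
    if ∀ q ∈ List.range l.length, q ≠ p → p ≤ q + b → q ≤ p + b → l.getD p 0 < l.getD q 0
    then some (l.getD p 0) else none

/-- `plevel b l r` is the list of elements of `E_{r+1}` of the path `l` (0-indexed:
`plevel b l 0 = l` is `E_1`), in path order. -/
def plevel (b : ℕ) (l : List ℕ) : ℕ → List ℕ
  | 0 => l
  | r + 1 => pmins b (plevel b l r)

/-- Advance `s` steps along the (level) list `l` from the element with value `v`;
`none` if undefined (i.e. `v ∉ l` or the advance would run past the end of the path). -/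
def padv (s : ℕ) (l : List ℕ) (v : ℕ) : Option ℕ :=
  if v ∈ l ∧ l.idxOf v + s < l.length then some (l.getD (l.idxOf v + s) 0) else none

/-- Retreat `s` steps along the (level) list `l` from the element with value `v`;
`none` if undefined. -/
def pret (s : ℕ) (l : List ℕ) (v : ℕ) : Option ℕ :=
  if v ∈ l ∧ s ≤ l.idxOf v then some (l.getD (l.idxOf v - s) 0) else none

/-- `iSeqP b l i k` is the element `i_{k+1}` of the (tentative) `b`-staircase from `i` on the
path `l`: `i_1 = i` and `i_{k+1} = π_k^b(i_k)`; `none` if undefined. -/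
def iSeqP (b : ℕ) (l : List ℕ) (i : ℕ) : ℕ → Option ℕ
  | 0 => if i ∈ l then some i else none
  | k + 1 => (iSeqP b l i k).bind (padv b (plevel b l k))

/-- `jSeqP b l r m q` is the element `j_{r+1-q}` of the descending part of the `b`-staircase of
size `r` with middle `m` on the path `l`: `j_{r+1} = m` and `j_k = π_k^b(j_{k+1})`. -/
def jSeqP (b : ℕ) (l : List ℕ) (r m : ℕ) : ℕ → Option ℕ
  | 0 => some m
  | q + 1 => (jSeqP b l r m q).bind (padv b (plevel b l (r - (q + 1))))

/-- There is a `b`-staircase of size `r` from `i` on the path `l`. -/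
def IsStaircaseP (b : ℕ) (l : List ℕ) (r i : ℕ) : Prop :=
  ∃ m, iSeqP b l i r = some m ∧ m ∈ plevel b l r ∧ (jSeqP b l r m r).isSome

/-- There is an almost `b`-staircase of size `r` from `i` on the path `l`
(membership in `E_k` required only for `k ∈ [r]`). -/
def IsAlmostP (b : ℕ) (l : List ℕ) (r i : ℕ) : Prop :=
  ∃ m, iSeqP b l i r = some m ∧ (jSeqP b l r m r).isSome

/-- The `b`-staircase of size `r` from `i` is the best one: on a path every almost
`b`-staircase is proper, so `i` has no almost `b`-staircase of size `r+1`. -/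
def IsBestP (b : ℕ) (l : List ℕ) (r i : ℕ) : Prop :=
  IsStaircaseP b l r i ∧ ¬ IsAlmostP b l (r + 1) i

/-- There is a half `b`-staircase of size `r` from `i` on the path `l`:
`i_1 = i, …, i_{r+1} = m = j_r, j_{r-1}, …, j_1`. -/
def IsHalfP (b : ℕ) (l : List ℕ) (r i : ℕ) : Prop :=
  ∃ m, iSeqP b l i r = some m ∧ (jSeqP b l (r - 1) m (r - 1)).isSome

/-- `ExtRank b l i v` says that the extended rank of `i` on the path `l` is `(t, h)`,
encoded (lexicographically faithfully) as the natural number `v = 2t + h`, where `t` is the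
rank of `i` (the size of the best staircase from `i`) and `h` records whether a half staircase
of size `t+1` from `i` exists. -/
def ExtRank (b : ℕ) (l : List ℕ) (i v : ℕ) : Prop :=
  ∃ t, IsBestP b l t i ∧
    ((IsHalfP b l (t + 1) i ∧ v = 2 * t + 1) ∨ (¬ IsHalfP b l (t + 1) i ∧ v = 2 * t))

/-- `len(u,w) = min{k > 0 : π^k(u) = w}` (0 if unreachable). -/
noncomputable def lenTo {n : ℕ} (π : Equiv.Perm (Fin n)) (u w : Fin n) : ℕ :=
  letI := Classical.propDecidable
  if h : ∃ k, 0 < k ∧ (⇑π)^[k] u = w then Nat.find h else 0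

/-- The path obtained from the cycle of `π` containing `x` by cutting before `π(x)`
(i.e. setting `π(x) := ⊥`), as the list of its elements (values) in path order:
it starts at `π(x)` and ends at `x`. -/
noncomputable def pathOf {n : ℕ} (π : Equiv.Perm (Fin n)) (x : Fin n) : List ℕ :=
  (List.range (lenTo π x x)).map fun j => ((⇑π)^[j + 1] x).val


section Aux

lemma exists_pos_iterate_mem (π : Equiv.Perm (Fin n)) {E : Finset (Fin n)} {x : Fin n}
    (hx : x ∈ E) : ∃ k, 0 < k ∧ (⇑π)^[k] x ∈ E := by
  refine ⟨orderOf π, orderOf_pos π, ?_⟩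
  rw [← Equiv.Perm.coe_pow, pow_orderOf_eq_one]
  simpa using hx

lemma exists_pos_iterate_eq (π : Equiv.Perm (Fin n)) (x : Fin n) :
    ∃ k, 0 < k ∧ (⇑π)^[k] x = x := by
  refine ⟨orderOf π, orderOf_pos π, ?_⟩
  rw [← Equiv.Perm.coe_pow, pow_orderOf_eq_one]; rfl

lemma nextIn_mem (π : Equiv.Perm (Fin n)) {E : Finset (Fin n)} {x : Fin n}
    (hx : x ∈ E) : nextIn π E x ∈ E := by
  rw [nextIn]
  have h := exists_pos_iterate_mem π hx
  rw [dif_pos h]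
  exact (Nat.find_spec h).2

lemma nextIn_injOn (π : Equiv.Perm (Fin n)) (E : Finset (Fin n)) {x y : Fin n}
    (hx : x ∈ E) (hy : y ∈ E) (h : nextIn π E x = nextIn π E y) : x = y := by
  have hex := exists_pos_iterate_mem π hx
  have hey := exists_pos_iterate_mem π hy
  rw [nextIn, dif_pos hex, nextIn, dif_pos hey] at h
  have hitinj : ∀ m : ℕ, Function.Injective ((⇑π)^[m]) :=
    fun m => Function.Injective.iterate π.injective m
  have key : ∀ (x y : Fin n) (hex : ∃ k, 0 < k ∧ (⇑π)^[k] x ∈ E)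
      (hey : ∃ k, 0 < k ∧ (⇑π)^[k] y ∈ E), x ∈ E → Nat.find hex ≤ Nat.find hey →
      (⇑π)^[Nat.find hex] x = (⇑π)^[Nat.find hey] y → x = y := by
    intro x y hex hey hxE hle heq
    set j := Nat.find hex with hj
    set k := Nat.find hey with hk
    have hjpos : 0 < j := (Nat.find_spec hex).1
    have : (⇑π)^[j + (k - j)] y = (⇑π)^[j] x := by
      rw [Nat.add_sub_cancel' hle]; exact heq.symm
    rw [Function.iterate_add_apply] at this
    have hxy : (⇑π)^[k - j] y = x := hitinj j this
    rcases Nat.eq_zero_or_pos (k - j) with h0 | hpos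
    · rw [h0] at hxy; exact hxy.symm
    · exfalso
      have hlt : k - j < k := by omega
      exact Nat.find_min hey hlt ⟨hpos, hxy ▸ hxE⟩
  rcases le_total (Nat.find hex) (Nat.find hey) with hle | hle
  · exact key x y hex hey hx hle h
  · exact (key y x hey hex hy hle h.symm).symm

lemma iterate_mem_cycleOfF_self (π : Equiv.Perm (Fin n)) (x₀ : Fin n) :
    ∀ m : ℕ, (⇑π)^[m] x₀ ∈ cycleOfF π x₀ := by
  have hex := exists_pos_iterate_eq π x₀
  set d := Nat.find hex with hd
  have hdpos : 0 < d := (Nat.find_spec hex).1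
  have hdfix : (⇑π)^[d] x₀ = x₀ := (Nat.find_spec hex).2
  have hinj : Set.InjOn (fun m => (⇑π)^[m] x₀) (Finset.range d) := by
    have hitinj : ∀ m : ℕ, Function.Injective ((⇑π)^[m]) :=
      fun m => Function.Injective.iterate π.injective m
    have key : ∀ a c : ℕ, a < c → c < d → (⇑π)^[a] x₀ = (⇑π)^[c] x₀ → False := by
      intro a c hac hcd heq
      have h1 : (⇑π)^[a + (c - a)] x₀ = (⇑π)^[a] x₀ := by
        rw [Nat.add_sub_cancel' hac.le]; exact heq.symm
      rw [Function.iterate_add_apply] at h1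
      have h2 : (⇑π)^[c - a] x₀ = x₀ := hitinj a h1
      exact Nat.find_min hex (by omega) ⟨by omega, h2⟩
    intro a ha c hc heq
    simp only [Finset.coe_range, Set.mem_Iio] at ha hc
    rcases lt_trichotomy a c with h | h | h
    · exact absurd (key a c h hc heq) not_false
    · exact h
    · exact absurd (key c a h ha heq.symm) not_false
  have hdn : d ≤ n := by
    have hcard := Finset.card_image_of_injOn hinj
    have hle : ((Finset.range d).image fun m => (⇑π)^[m] x₀).card ≤ n := by
      have := Finset.card_le_univ ((Finset.range d).image fun m => (⇑π)^[m] x₀)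
      simpa using this
    rw [hcard, Finset.card_range] at hle
    exact hle
  intro m
  have hmod : (⇑π)^[m] x₀ = (⇑π)^[m % d] x₀ := by
    conv_lhs => rw [← Nat.mod_add_div m d, Function.iterate_add_apply,
      Function.iterate_mul, Function.iterate_fixed hdfix]
  rw [hmod, cycleOfF, Finset.mem_image]
  exact ⟨m % d, Finset.mem_range.mpr (lt_of_lt_of_le (Nat.mod_lt m hdpos) hdn), rfl⟩

lemma iterate_mem_cycleOfF (π : Equiv.Perm (Fin n)) (x₀ : Fin n) {x : Fin n}
    (hx : x ∈ cycleOfF π x₀) (j : ℕ) : (⇑π)^[j] x ∈ cycleOfF π x₀ := by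
  rw [cycleOfF, Finset.mem_image] at hx
  obtain ⟨k, _, rfl⟩ := hx
  rw [← Function.iterate_add_apply]
  exact iterate_mem_cycleOfF_self π x₀ (j + k)

lemma nextIn_mem_cycle (π : Equiv.Perm (Fin n)) (E : Finset (Fin n)) (x₀ : Fin n) {x : Fin n}
    (hx : x ∈ cycleOfF π x₀) : nextIn π E x ∈ cycleOfF π x₀ := by
  rw [nextIn]
  split
  · exact iterate_mem_cycleOfF π x₀ hx _
  · exact hx

lemma filterMap_sublist_map {α β : Type*} (L : List α) (f : α → Option β) (g : α → β)
    (h : ∀ a b, f a = some b → b = g a) : List.Sublist (L.filterMap f) (L.map g) := by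
  induction L with
  | nil => simp
  | cons a L ih =>
    rw [List.filterMap_cons, List.map_cons]
    cases hfa : f a with
    | none => exact ih.cons (g a)
    | some b => rw [h a b hfa]; exact ih.cons₂ (g a)

lemma map_getD_range (l : List ℕ) : (List.range l.length).map (fun p => l.getD p 0) = l := by
  apply List.ext_getElem
  · simp
  · intro i h1 h2
    simp only [List.getElem_map, List.getElem_range]
    exact List.getD_eq_getElem l 0 h2

lemma pmins_sublist (b : ℕ) (l : List ℕ) : List.Sublist (pmins b l) l := by
  have := filterMap_sublist_map (List.range l.length)
    (fun p => if ∀ q ∈ List.range l.length, q ≠ p → p ≤ q + b → q ≤ p + b →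
        l.getD p 0 < l.getD q 0 then some (l.getD p 0) else none)
    (fun p => l.getD p 0) (by
      intro a c h
      split at h
      · exact (Option.some_inj.mp h).symm
      · exact absurd h (by simp))
  rw [map_getD_range] at this
  exact this

lemma min_mem_pmins {b : ℕ} {l : List ℕ} (h0 : l ≠ []) (hnd : l.Nodup) :
    ∃ p, p < l.length ∧ (∀ q, q < l.length → q ≠ p → l.getD p 0 < l.getD q 0) ∧
      l.getD p 0 ∈ pmins b l := by
  have hne : l.toFinset.Nonempty := by
    simpa [List.toFinset_eq_empty_iff] using h0
  set v := l.toFinset.min' hne with hv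
  have hvl : v ∈ l := by
    have := l.toFinset.min'_mem hne; rwa [List.mem_toFinset] at this
  obtain ⟨p, hp, hpe⟩ := List.getElem_of_mem hvl
  have hkey : ∀ q, q < l.length → q ≠ p → l.getD p 0 < l.getD q 0 := by
    intro q hq hqp
    rw [List.getD_eq_getElem l 0 hq, List.getD_eq_getElem l 0 hp, hpe]
    have hle : v ≤ l[q] :=
      l.toFinset.min'_le _ (by rw [List.mem_toFinset]; exact List.getElem_mem hq)
    have hne' : l[q] ≠ v := by
      rw [← hpe]
      intro h
      exact hqp ((hnd.getElem_inj_iff).mp h)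
    exact lt_of_le_of_ne hle (Ne.symm hne')
  refine ⟨p, hp, hkey, ?_⟩
  rw [pmins, List.mem_filterMap]
  refine ⟨p, List.mem_range.mpr hp, ?_⟩
  rw [if_pos]
  intro q hq hqp _ _
  exact hkey q (List.mem_range.mp hq) hqp

lemma pmins_ne_nil {b : ℕ} {l : List ℕ} (h0 : l ≠ []) (hnd : l.Nodup) : pmins b l ≠ [] := by
  obtain ⟨p, _, _, hmem⟩ := min_mem_pmins (b := b) h0 hnd
  exact List.ne_nil_of_mem hmem

lemma nodup_singleton_of_all_eq {α : Type*} {L : List α} {v : α} (hnd : L.Nodup)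
    (hv : v ∈ L) (hall : ∀ w ∈ L, w = v) : L.length = 1 := by
  cases L with
  | nil => exact absurd hv (by simp)
  | cons w L' =>
    cases L' with
    | nil => rfl
    | cons w' L'' =>
      exfalso
      have h1 : w = v := hall w (by simp)
      have h2 : w' = v := hall w' (by simp)
      simp [h1, h2] at hnd

lemma length_pmins_of_le {b : ℕ} {l : List ℕ} (h0 : l ≠ []) (hnd : l.Nodup)
    (hlen : l.length ≤ b) : (pmins b l).length = 1 := by
  obtain ⟨p, hp, hmin, hmem⟩ := min_mem_pmins (b := b) h0 hnd
  apply nodup_singleton_of_all_eq ((pmins_sublist b l).nodup hnd) hmem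
  intro w hw
  rw [pmins, List.mem_filterMap] at hw
  obtain ⟨q, hq, hqe⟩ := hw
  rw [List.mem_range] at hq
  split at hqe
  · rename_i hcond
    rcases eq_or_ne q p with rfl | hne
    · exact (Option.some_inj.mp hqe).symm
    · exfalso
      have := hcond p (List.mem_range.mpr hp) (Ne.symm hne) (by omega) (by omega)
      exact absurd (hmin q hq hne) (by omega)
  · exact absurd hqe (by simp)

lemma pathOf_nodup (π : Equiv.Perm (Fin n)) (x₀ : Fin n) : (pathOf π x₀).Nodup := by
  have hex := exists_pos_iterate_eq π x₀
  have hlen : lenTo π x₀ x₀ = Nat.find hex := by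
    rw [lenTo, dif_pos hex]
    congr!
  rw [pathOf, hlen]
  apply List.Nodup.map_on _ List.nodup_range
  intro a ha c hc heq
  rw [List.mem_range] at ha hc
  have heq' : (⇑π)^[a + 1] x₀ = (⇑π)^[c + 1] x₀ := Fin.val_injective heq
  have hitinj : ∀ m : ℕ, Function.Injective ((⇑π)^[m]) :=
    fun m => Function.Injective.iterate π.injective m
  have key : ∀ a c : ℕ, a < c → c < Nat.find hex →
      (⇑π)^[a + 1] x₀ = (⇑π)^[c + 1] x₀ → False := by
    intro a c hac hcd heq
    have h1 : (⇑π)^[(a + 1) + (c - a)] x₀ = (⇑π)^[a + 1] x₀ := by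
      rw [show (a + 1) + (c - a) = c + 1 by omega]; exact heq.symm
    rw [Function.iterate_add_apply] at h1
    have h2 : (⇑π)^[c - a] x₀ = x₀ := hitinj (a + 1) h1
    exact Nat.find_min hex (by omega) ⟨by omega, h2⟩
  rcases lt_trichotomy a c with h | h | h
  · exact absurd (key a c h hc heq') not_false
  · exact h
  · exact absurd (key c a h ha heq'.symm) not_false

lemma pathOf_ne_nil (π : Equiv.Perm (Fin n)) (x₀ : Fin n) : pathOf π x₀ ≠ [] := by
  have hex := exists_pos_iterate_eq π x₀
  have hlen : lenTo π x₀ x₀ = Nat.find hex := by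
    rw [lenTo, dif_pos hex]
    congr!
  have hpos : 0 < lenTo π x₀ x₀ := by rw [hlen]; exact (Nat.find_spec hex).1
  rw [pathOf]
  simp only [ne_eq, List.map_eq_nil_iff, List.range_eq_nil]
  omega

lemma mem_level_succ {π : Equiv.Perm (Fin n)} {b r : ℕ} {i : Fin n}
    (h : i ∈ level π b (r + 1)) :
    i ∈ level π b r ∧
      (∀ k ∈ Finset.Icc 1 b, i < (nextIn π (level π b r))^[k] i) ∧
      (∀ k ∈ Finset.Icc 1 b, i < (nextIn π⁻¹ (level π b r))^[k] i) :=
  (@Finset.mem_filter (Fin n)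
    (fun i => (∀ k ∈ Finset.Icc 1 b, i < (nextIn π (level π b r))^[k] i) ∧
      (∀ k ∈ Finset.Icc 1 b, i < (nextIn π⁻¹ (level π b r))^[k] i))
    (fun i => @instDecidableAnd _ _ (Classical.propDecidable _) (Classical.propDecidable _))
    (level π b r) i).mp h |> fun ⟨h1, h2⟩ => ⟨h1, h2⟩

end Aux

/-- Let `C` be a cycle of `π` and `t` the largest `r` with `|E_r ∩ C| > b`
(`t = 0` if `|C| ≤ b`).  Then `E_{t+2} ∩ C = ∅`.  Moreover, if `P` is a path obtained from a
cycle of `π` by one cut and `t′` is the largest `r` with `|E_r ∩ P| > b` (`t′ = 0` if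
`|P| ≤ b`, levels computed on the path), then `|E_{t′+2} ∩ P| = 1`.
(Recall `level`/`plevel` are 0-indexed: `E_r = level π b (r-1)` resp. `plevel b P (r-1)`.) -/
theorem level_after_largest (n b : ℕ) (hb : 1 ≤ b) (π : Equiv.Perm (Fin n))
    (x : Fin n) (C : Finset (Fin n)) (hC : C = cycleOfF π x)
    (t : ℕ)
    (ht0 : C.card ≤ b → t = 0)
    (ht1 : t ≠ 0 → b < ((level π b (t - 1)) ∩ C).card)
    (ht2 : ∀ r, t < r → ¬ b < ((level π b (r - 1)) ∩ C).card)
    (x' : Fin n) (P : List ℕ) (hP : P = pathOf π x')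
    (t' : ℕ)
    (ht0' : P.length ≤ b → t' = 0)
    (ht1' : t' ≠ 0 → b < (plevel b P (t' - 1)).length)
    (ht2' : ∀ r, t' < r → ¬ b < (plevel b P (r - 1)).length) :
    (level π b (t + 1)) ∩ C = ∅ ∧ (plevel b P (t' + 1)).length = 1 := by
  constructor
  · -- Part 1: cycle case
    have hcard : ((level π b t) ∩ C).card ≤ b := by
      have h := ht2 (t + 1) (by omega)
      rw [Nat.add_sub_cancel] at h
      omega
    rw [Finset.eq_empty_iff_forall_notMem]
    intro i hi
    rw [Finset.mem_inter] at hi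
    obtain ⟨hiL, hiC⟩ := hi
    obtain ⟨hiE, hfwd, _⟩ := mem_level_succ hiL
    set N := nextIn π (level π b t) with hN
    set S := (level π b t) ∩ C with hS
    have hiS : i ∈ S := Finset.mem_inter.mpr ⟨hiE, hiC⟩
    have hNS : ∀ y ∈ S, N y ∈ S := by
      intro y hy
      rw [Finset.mem_inter] at hy
      refine Finset.mem_inter.mpr ⟨nextIn_mem π hy.1, ?_⟩
      rw [hC] at hy ⊢
      exact nextIn_mem_cycle π (level π b t) x hy.2
    have hiter : ∀ k : ℕ, N^[k] i ∈ S := by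
      intro k
      induction k with
      | zero => exact hiS
      | succ k ih => rw [Function.iterate_succ_apply']; exact hNS _ ih
    have hcancel : ∀ (a : ℕ) (u v : Fin n), u ∈ S → v ∈ S → N^[a] u = N^[a] v → u = v := by
      intro a
      induction a with
      | zero => intro u v _ _ h; simpa using h
      | succ a ih =>
        intro u v hu hv h
        rw [Function.iterate_succ_apply, Function.iterate_succ_apply] at h
        have := ih (N u) (N v) (hNS u hu) (hNS v hv) h
        exact nextIn_injOn π (level π b t) (Finset.mem_inter.mp hu).1
          (Finset.mem_inter.mp hv).1 this
    obtain ⟨a, ha, c, hc, hne, heq⟩ :=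
      Finset.exists_ne_map_eq_of_card_lt_of_maps_to
        (s := Finset.range (b + 1)) (t := S)
        (by rw [Finset.card_range]; omega)
        (fun k _ => hiter k)
    rw [Finset.mem_range] at ha hc
    have key : ∀ a c : ℕ, a < c → c < b + 1 → N^[a] i = N^[c] i → False := by
      intro a c hac hcb heq
      have h1 : N^[a + (c - a)] i = N^[a] i := by
        rw [Nat.add_sub_cancel' hac.le]; exact heq.symm
      rw [Function.iterate_add_apply] at h1
      have h2 : N^[c - a] i = i := hcancel a _ _ (hiter (c - a)) hiS h1
      have h3 := hfwd (c - a) (Finset.mem_Icc.mpr ⟨by omega, by omega⟩)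
      rw [h2] at h3
      exact lt_irrefl i h3
    rcases lt_trichotomy a c with h | h | h
    · exact key a c h hc heq
    · exact hne h
    · exact key c a h ha heq.symm
  · -- Part 2: path case
    have hPnd : P.Nodup := by rw [hP]; exact pathOf_nodup π x'
    have hPne : P ≠ [] := by rw [hP]; exact pathOf_ne_nil π x'
    have hplev : ∀ r : ℕ, (plevel b P r).Nodup ∧ plevel b P r ≠ [] := by
      intro r
      induction r with
      | zero => exact ⟨hPnd, hPne⟩
      | succ r ih =>
        simp only [plevel]
        exact ⟨(pmins_sublist b _).nodup ih.1, pmins_ne_nil ih.2 ih.1⟩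
    have hlen : (plevel b P t').length ≤ b := by
      have h := ht2' (t' + 1) (by omega)
      rw [Nat.add_sub_cancel] at h
      omega
    show (plevel b P (t' + 1)).length = 1
    simp only [plevel]
    exact length_pmins_of_le (hplev t').2 (hplev t').1 hlen
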